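/- (Sylvester) Let a, b ≥ 2 be coprime integers. The number of nonnegative integers n that are NOT of the form a·i + b·j with i, j ≥ 0 equals (a−1)(b−1)/2. -/
import Mathlib


open Set

theorem stmt_14 (a b : ℕ) (ha : 2 ≤ a) (hb : 2 ≤ b) (hab : Nat.Coprime a b) :
    {n : ℕ | ¬ ∃ i j : ℕ, a * i + b * j = n}.ncard = (a - 1) * (b - 1) / 2 := by
  classical
  haveI : NeZero b := ⟨by omega⟩
  set N := a * b - a - b with hN
  have hab' : a + b ≤ a * b := by nlinarith
  have hNab : N + a + b = a * b := by omega
  have hN1 : N + 1 = (a - 1) * (b - 1) := by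
    have h1 : (a - 1) * (b - 1) = a * b - a * 1 - (b - 1) := by
      rw [← Nat.mul_sub, Nat.sub_mul, Nat.one_mul]
    omega
  -- the unit (a : ZMod b)
  have hu : IsUnit (a : ZMod b) := (ZMod.isUnit_iff_coprime a b).mpr hab
  have huinv : (a : ZMod b) * (a : ZMod b)⁻¹ = 1 := ZMod.mul_inv_of_unit _ hu
  -- canonical residue
  set x : ℕ → ℕ := fun n => ((n : ZMod b) * (a : ZMod b)⁻¹).val with hx
  have hxlt : ∀ n, x n < b := fun n => ZMod.val_lt _
  have hcastval : ∀ z : ZMod b, ((z.val : ℕ) : ZMod b) = z := by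
    intro z; rw [ZMod.natCast_val, ZMod.cast_id]
  have hamul : ∀ n : ℕ, ((a * x n : ℕ) : ZMod b) = (n : ZMod b) := by
    intro n
    push_cast
    rw [hx]
    simp only []
    rw [hcastval, ← mul_assoc, mul_comm (a : ZMod b) (n : ZMod b), mul_assoc, huinv, mul_one]
  have hmodeq : ∀ n : ℕ, a * x n ≡ n [MOD b] :=
    fun n => (ZMod.natCast_eq_natCast_iff _ _ _).mp (hamul n)
  -- representability criterion
  have rep_iff : ∀ n : ℕ, (∃ i j : ℕ, a * i + b * j = n) ↔ a * x n ≤ n := by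
    intro n
    constructor
    · rintro ⟨i, j, h⟩
      have hcn : (n : ZMod b) = ((a * i : ℕ) : ZMod b) := by
        rw [← h]
        push_cast [ZMod.natCast_self]
        ring
      have hxi : x n = i % b := by
        rw [hx]
        simp only []
        rw [hcn]
        push_cast
        rw [mul_comm (a : ZMod b) (i : ZMod b), mul_assoc, huinv, mul_one, ZMod.val_natCast]
      have hle : x n ≤ i := hxi ▸ Nat.mod_le i b
      have := Nat.mul_le_mul_left a hle
      omega
    · intro h
      obtain ⟨k, hk⟩ := (Nat.modEq_iff_dvd' h).mp (hmodeq n)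
      exact ⟨x n, k, by omega⟩
  have hab1 : a * (b - 1) = N + b := by
    have : a * (b - 1) = a * b - a * 1 := by rw [← Nat.mul_sub]
    omega
  -- all n > N are representable
  have hbig : ∀ n : ℕ, N < n → (∃ i j : ℕ, a * i + b * j = n) := by
    intro n hn
    rw [rep_iff]
    by_contra hlt
    push_neg at hlt
    have hd : b ∣ a * x n - n := (Nat.modEq_iff_dvd' (le_of_lt hlt)).mp (hmodeq n).symm
    have hge : b ≤ a * x n - n := Nat.le_of_dvd (by omega) hd
    have : a * x n ≤ a * (b - 1) := Nat.mul_le_mul_left a (by have := hxlt n; omega)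
    omega
  -- symmetry of residues
  have hsym : ∀ n : ℕ, n ≤ N → x (N - n) = b - 1 - x n := by
    intro n hn
    have hNc : ((N : ℕ) : ZMod b) = -(a : ZMod b) := by
      have := congrArg (fun m : ℕ => (m : ZMod b)) hNab
      push_cast at this
      rw [ZMod.natCast_self] at this
      · linear_combination this
    have hcast : (((N - n : ℕ)) : ZMod b) = ((b - 1 - x n : ℕ) : ZMod b) * (a : ZMod b) := by
      rw [Nat.cast_sub hn, hNc]
      have h1 : ((b - 1 - x n : ℕ) : ZMod b) = -1 - ((x n : ℕ) : ZMod b) := by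
        rw [Nat.cast_sub (by have := hxlt n; omega), Nat.cast_sub (by omega)]
        rw [ZMod.natCast_self]
        push_cast
        ring
      rw [h1, hx]
      simp only []
      rw [hcastval]
      have hna : (n : ZMod b) = (n : ZMod b) * (a : ZMod b)⁻¹ * (a : ZMod b) := by
        rw [mul_assoc, mul_comm ((a : ZMod b)⁻¹) _, huinv, mul_one]
      calc -(a : ZMod b) - (n : ZMod b)
          = -(a : ZMod b) - (n : ZMod b) * (a : ZMod b)⁻¹ * (a : ZMod b) := by rw [← hna]
        _ = (-1 - (n : ZMod b) * (a : ZMod b)⁻¹) * (a : ZMod b) := by ring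
    show (((N - n : ℕ) : ZMod b) * (a : ZMod b)⁻¹).val = b - 1 - x n
    rw [hcast, mul_assoc, huinv, mul_one, ZMod.val_natCast, Nat.mod_eq_of_lt (by have := hxlt n; omega)]
  -- key complementarity
  have hkey : ∀ n : ℕ, n ≤ N →
      ((∃ i j : ℕ, a * i + b * j = n) ↔ ¬ (∃ i j : ℕ, a * i + b * j = N - n)) := by
    intro n hn
    rw [rep_iff, rep_iff, hsym n hn]
    have hpq : a * x n + a * (b - 1 - x n) = N + b := by
      rw [← Nat.mul_add]
      have : x n + (b - 1 - x n) = b - 1 := by have := hxlt n; omega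
      rw [this, hab1]
    constructor
    · intro h hq
      omega
    · intro h
      by_contra hpn
      push_neg at hpn
      have hd : b ∣ a * x n - n := (Nat.modEq_iff_dvd' (le_of_lt hpn)).mp (hmodeq n).symm
      have hge : b ≤ a * x n - n := Nat.le_of_dvd (by omega) hd
      omega
  -- counting
  set P : ℕ → Prop := fun n => ∃ i j : ℕ, a * i + b * j = n with hP
  set S : Finset ℕ := (Finset.range (N + 1)).filter (fun n => ¬ P n) with hS
  set R : Finset ℕ := (Finset.range (N + 1)).filter P with hR
  have hset : {n : ℕ | ¬ ∃ i j : ℕ, a * i + b * j = n} = ↑S := by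
    ext n
    simp only [hS, Set.mem_setOf_eq, Finset.coe_filter, Finset.mem_range, Set.mem_setOf_eq, hP]
    constructor
    · intro h
      refine ⟨?_, h⟩
      by_contra hgt
      exact h (hbig n (by omega))
    · exact fun h => h.2
  rw [hset, Set.ncard_coe_finset]
  have hcards : R.card + S.card = N + 1 := by
    rw [hR, hS, Finset.card_filter_add_card_filter_not, Finset.card_range]
  have hSR : S.card = R.card := by
    apply Finset.card_bij (fun n _ => N - n)
    · intro n hn
      simp only [hS, Finset.mem_filter, Finset.mem_range] at hn
      simp only [hR, Finset.mem_filter, Finset.mem_range]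
      refine ⟨by omega, ?_⟩
      have := (hkey n (by omega))
      by_contra hc
      exact hn.2 (this.mpr (by
        have hx2 : N - n ≤ N := by omega
        intro hrep
        exact hc hrep))
    · intro m hm m' hm' hmm
      simp only [hS, Finset.mem_filter, Finset.mem_range] at hm hm'
      omega
    · intro m hm
      simp only [hR, Finset.mem_filter, Finset.mem_range] at hm
      refine ⟨N - m, ?_, by omega⟩
      simp only [hS, Finset.mem_filter, Finset.mem_range]
      refine ⟨by omega, ?_⟩
      exact (hkey m (by omega)).mp hm.2
  omega
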